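/- Let SEQ = (c_1, …, c_n) be a sequence of simple coins with c_k = (P_k, μ_k), 0 < P_k ≤ 1, rates r_k = μ_k/P_k, let E be a real penalty, and let 1 ≤ i < n. Let SEQ′ be obtained from SEQ by interchanging c_i and c_{i+1}. Then COST(SEQ′, E) − COST(SEQ, E) = (∏_{k=1}^{i−1}(1−P_k))·P_i·P_{i+1}·(r_{i+1}−r_i). Consequently, if r_i ≥ r_{i+1} then COST(SEQ′, E) ≤ COST(SEQ, E); and if moreover P_k < 1 for all k < i, then equality holds if and only if r_i = r_{i+1}. -/

import Mathlib

open Finset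

/-- Expected cost of tossing the coins `(P 0, μ 0), …, (P (n-1), μ (n-1))` in order,
paying the penalty `E` if all tosses fail. -/
noncomputable def seqCost (n : ℕ) (P μ : ℕ → ℝ) (E : ℝ) : ℝ :=
  (∑ i ∈ range n, (∏ j ∈ range i, (1 - P j)) * μ i) + (∏ j ∈ range n, (1 - P j)) * E

/-- Lemma 1: interchanging adjacent coins `c_i` and `c_{i+1}` (`0`-based indices `i`
and `i+1` with `i + 1 < n`) changes the cost by
`(∏_{k<i}(1-P_k)) · P_i · P_{i+1} · (r_{i+1} - r_i)`. Consequently, if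
`r_i ≥ r_{i+1}` the swapped sequence costs no more, and (when `P_k < 1` for all
`k < i`) the costs are equal iff `r_i = r_{i+1}`. -/
theorem swap_adjacent_coins_cost
    (n : ℕ) (P μ r : ℕ → ℝ)
    (hP : ∀ k < n, 0 < P k ∧ P k ≤ 1) (hμ : ∀ k < n, 0 ≤ μ k)
    (hr : ∀ k < n, r k = μ k / P k) (E : ℝ)
    (i : ℕ) (hi : i + 1 < n) :
    seqCost n (P ∘ Equiv.swap i (i + 1)) (μ ∘ Equiv.swap i (i + 1)) E
        - seqCost n P μ E
      = (∏ k ∈ range i, (1 - P k)) * P i * P (i + 1) * (r (i + 1) - r i)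
    ∧ (r (i + 1) ≤ r i →
        seqCost n (P ∘ Equiv.swap i (i + 1)) (μ ∘ Equiv.swap i (i + 1)) E
          ≤ seqCost n P μ E)
    ∧ ((∀ k < i, P k < 1) →
        (seqCost n (P ∘ Equiv.swap i (i + 1)) (μ ∘ Equiv.swap i (i + 1)) E
            = seqCost n P μ E ↔ r i = r (i + 1))) := by
  set σ := Equiv.swap i (i + 1) with hσ
  have hσlt : ∀ j, j < i → σ j = j := fun j hj =>
    Equiv.swap_apply_of_ne_of_ne (by omega) (by omega)
  have hσgt : ∀ j, i + 1 < j → σ j = j := fun j hj =>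
    Equiv.swap_apply_of_ne_of_ne (by omega) (by omega)
  have hσi : σ i = i + 1 := Equiv.swap_apply_left _ _
  have hσi1 : σ (i + 1) = i := Equiv.swap_apply_right _ _
  -- products for truncations below i
  have hprodle : ∀ m, m ≤ i →
      ∏ j ∈ range m, (1 - P (σ j)) = ∏ j ∈ range m, (1 - P j) := by
    intro m hm
    refine Finset.prod_congr rfl fun j hj => ?_
    rw [hσlt j (by simp only [mem_range] at hj; omega)]
  -- products for truncations above i+1
  have hprodgt : ∀ m, i + 1 < m →
      ∏ j ∈ range m, (1 - P (σ j)) = ∏ j ∈ range m, (1 - P j) := by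
    intro m hm
    refine Finset.prod_equiv σ (fun j => ?_) (fun j _ => rfl)
    simp only [mem_range]
    rcases eq_or_ne j i with rfl | h1
    · rw [hσi]; omega
    rcases eq_or_ne j (i + 1) with rfl | h2
    · rw [hσi1]; omega
    · rw [Equiv.swap_apply_of_ne_of_ne h1 h2]
  set A := ∏ k ∈ range i, (1 - P k) with hA
  set T : ℕ → ℝ := fun j => (∏ k ∈ range j, (1 - P k)) * μ j with hT
  set T' : ℕ → ℝ := fun j => (∏ k ∈ range j, (1 - P (σ k))) * μ (σ j) with hT'
  have hTeq : ∀ j, j ≠ i → j ≠ i + 1 → T' j = T j := by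
    intro j h1 h2
    rcases lt_or_ge j i with h | h
    · simp only [hT, hT', hprodle j (le_of_lt h), hσlt j h,
        Equiv.swap_apply_of_ne_of_ne h1 h2]
    · have hj : i + 1 < j := by omega
      simp only [hT, hT', hprodgt j hj, hσgt j hj, Equiv.swap_apply_of_ne_of_ne h1 h2]
  have hsum : (∑ j ∈ range n, T' j) - (∑ j ∈ range n, T j)
      = (T' i - T i) + (T' (i + 1) - T (i + 1)) := by
    rw [← Finset.sum_sub_distrib]
    rw [← Finset.sum_subset (s₁ := ({i, i + 1} : Finset ℕ))
        (fun x hx => by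
          simp only [mem_insert, mem_singleton] at hx
          rcases hx with rfl | rfl <;> simp [mem_range] <;> omega)
        (fun x hx hnx => by
          simp only [mem_insert, mem_singleton, not_or] at hnx
          rw [hTeq x hnx.1 hnx.2, sub_self])]
    rw [Finset.sum_pair (by omega)]
  have hTi : T' i = A * μ (i + 1) := by
    simp only [hT', hprodle i le_rfl, hσi, hA]
  have hTi1 : T' (i + 1) = A * (1 - P (i + 1)) * μ i := by
    simp only [hT', hσi1, Finset.prod_range_succ, hprodle i le_rfl, hσi, hA]
  have hTio : T i = A * μ i := rfl
  have hTi1o : T (i + 1) = A * (1 - P i) * μ (i + 1) := by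
    simp only [hT, Finset.prod_range_succ, hA]
  have hPi := hP i (by omega)
  have hPi1 := hP (i + 1) hi
  have hμi : μ i = r i * P i := by
    rw [hr i (by omega), div_mul_cancel₀ _ (ne_of_gt hPi.1)]
  have hμi1 : μ (i + 1) = r (i + 1) * P (i + 1) := by
    rw [hr (i + 1) hi, div_mul_cancel₀ _ (ne_of_gt hPi1.1)]
  have key : seqCost n (P ∘ σ) (μ ∘ σ) E - seqCost n P μ E
      = A * P i * P (i + 1) * (r (i + 1) - r i) := by
    have hpn : ∏ j ∈ range n, (1 - P (σ j)) = ∏ j ∈ range n, (1 - P j) :=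
      hprodgt n hi
    simp only [seqCost, Function.comp_apply]
    have : (∑ j ∈ range n, (∏ k ∈ range j, (1 - P (σ k))) * μ (σ j))
        = ∑ j ∈ range n, T' j := rfl
    rw [this, hpn]
    have : (∑ j ∈ range n, (∏ k ∈ range j, (1 - P k)) * μ j)
        = ∑ j ∈ range n, T j := rfl
    rw [this]
    have expand : (∑ j ∈ range n, T' j) + (∏ j ∈ range n, (1 - P j)) * E
        - ((∑ j ∈ range n, T j) + (∏ j ∈ range n, (1 - P j)) * E)
        = (∑ j ∈ range n, T' j) - (∑ j ∈ range n, T j) := by ring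
    rw [expand, hsum, hTi, hTi1, hTio, hTi1o, hμi, hμi1]
    ring
  have hAnn : 0 ≤ A := by
    refine Finset.prod_nonneg fun k hk => ?_
    have := hP k (by simp only [mem_range] at hk; omega)
    linarith [this.2]
  refine ⟨key, fun hrle => ?_, fun hPlt => ?_⟩
  · have : A * P i * P (i + 1) * (r (i + 1) - r i) ≤ 0 := by
      apply mul_nonpos_of_nonneg_of_nonpos
      · exact mul_nonneg (mul_nonneg hAnn hPi.1.le) hPi1.1.le
      · linarith
    linarith [key, this]
  · have hApos : 0 < A := by
      refine Finset.prod_pos fun k hk => ?_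
      have := hPlt k (by simpa using hk)
      linarith
    rw [← sub_eq_zero]
    rw [key]
    constructor
    · intro h
      have h' : r (i + 1) - r i = 0 := by
        have hne : A * P i * P (i + 1) ≠ 0 :=
          (mul_pos (mul_pos hApos hPi.1) hPi1.1).ne'
        exact (mul_eq_zero.mp h).resolve_left hne
      linarith
    · intro h
      rw [h]
      ring
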